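/- Let g : ℝ × ℝ → ℝ be continuous, let Z_{i,j} (i∈{0,1}, j∈{0,…,3}) be real constants, and let Z_{2,j} (j∈{0,…,3}) and Z_{i,4} (i∈{0,1}) be continuous functions on ℝ. Define u(x₁,x₂) by the Taylor-type formula: u(x₁,x₂) = Σ_{i=0}^{1}Σ_{j=0}^{3}(x₁^i/i!)(x₂^j/j!)Z_{i,j} + Σ_{j=0}^{3}(x₂^j/j!)∫₀^{x₁}(x₁-η)Z_{2,j}(η)dη + Σ_{i=0}^{1}(x₁^i/i!)∫₀^{x₂}((x₂-τ)³/6)Z_{i,4}(τ)dτ + ∫₀^{x₁}∫₀^{x₂}(x₁-η)((x₂-τ)³/6)g(η,τ)dτdη. Then D₁²D₂⁴u = g and u satisfies all the non-classical Goursat conditions (4) with the given data. -/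

import Mathlib

open intervalIntegral

open MeasureTheory

noncomputable def J0 (f : ℝ → ℝ) (x : ℝ) : ℝ := ∫ t in (0:ℝ)..x, f t
noncomputable def J1 (f : ℝ → ℝ) (x : ℝ) : ℝ := ∫ t in (0:ℝ)..x, (x - t) * f t
noncomputable def J2 (f : ℝ → ℝ) (x : ℝ) : ℝ := ∫ t in (0:ℝ)..x, (x - t) ^ 2 / 2 * f t
noncomputable def J3 (f : ℝ → ℝ) (x : ℝ) : ℝ := ∫ t in (0:ℝ)..x, (x - t) ^ 3 / 6 * f t

@[simp] lemma J0_zero (f : ℝ → ℝ) : J0 f 0 = 0 := intervalIntegral.integral_same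
@[simp] lemma J1_zero (f : ℝ → ℝ) : J1 f 0 = 0 := intervalIntegral.integral_same
@[simp] lemma J2_zero (f : ℝ → ℝ) : J2 f 0 = 0 := intervalIntegral.integral_same
@[simp] lemma J3_zero (f : ℝ → ℝ) : J3 f 0 = 0 := intervalIntegral.integral_same

lemma HasDerivAt.congr_d {f : ℝ → ℝ} {a b x : ℝ} (h : HasDerivAt f a x) (hab : a = b) :
    HasDerivAt f b x := hab ▸ h

lemma derivEq {f w : ℝ → ℝ} (h : ∀ x, HasDerivAt f (w x) x) : deriv f = w :=
  funext fun x => (h x).deriv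

variable {f : ℝ → ℝ}

lemma J0_hasDerivAt (hf : Continuous f) (x : ℝ) : HasDerivAt (J0 f) (f x) x :=
  (hf.integral_hasStrictDerivAt 0 x).hasDerivAt

lemma E1 (hf : Continuous f) (x : ℝ) :
    J1 f x = x * J0 f x - J0 (fun t => t * f t) x := by
  unfold J1 J0
  rw [← intervalIntegral.integral_const_mul,
    ← intervalIntegral.integral_sub (f := fun t => x * f t) (g := fun t => t * f t)
      ((continuous_const.mul hf).intervalIntegrable _ _)
      ((continuous_id'.mul hf).intervalIntegrable _ _)]
  exact intervalIntegral.integral_congr fun t _ => by ring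

lemma E2 (hf : Continuous f) (x : ℝ) :
    J2 f x = x ^ 2 / 2 * J0 f x - x * J0 (fun t => t * f t) x
      + 1 / 2 * J0 (fun t => t ^ 2 * f t) x := by
  unfold J2 J0
  rw [← intervalIntegral.integral_const_mul, ← intervalIntegral.integral_const_mul,
    ← intervalIntegral.integral_const_mul,
    ← intervalIntegral.integral_sub (f := fun t => x ^ 2 / 2 * f t) (g := fun t => x * (t * f t))
      ((continuous_const.mul hf).intervalIntegrable _ _)
      ((continuous_const.mul (continuous_id'.mul hf)).intervalIntegrable _ _),
    ← intervalIntegral.integral_add (f := fun t => x ^ 2 / 2 * f t - x * (t * f t))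
      (g := fun t => 1 / 2 * (t ^ 2 * f t))
      (((continuous_const.mul hf).sub
        (continuous_const.mul (continuous_id'.mul hf))).intervalIntegrable _ _)
      ((continuous_const.mul ((continuous_id'.pow 2).mul hf)).intervalIntegrable _ _)]
  exact intervalIntegral.integral_congr fun t _ => by ring

lemma E3 (hf : Continuous f) (x : ℝ) :
    J3 f x = x ^ 3 / 6 * J0 f x - x ^ 2 / 2 * J0 (fun t => t * f t) x
      + x / 2 * J0 (fun t => t ^ 2 * f t) x - 1 / 6 * J0 (fun t => t ^ 3 * f t) x := by
  unfold J3 J0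
  rw [← intervalIntegral.integral_const_mul, ← intervalIntegral.integral_const_mul,
    ← intervalIntegral.integral_const_mul, ← intervalIntegral.integral_const_mul,
    ← intervalIntegral.integral_sub (f := fun t => x ^ 3 / 6 * f t)
      (g := fun t => x ^ 2 / 2 * (t * f t))
      ((continuous_const.mul hf).intervalIntegrable _ _)
      ((continuous_const.mul (continuous_id'.mul hf)).intervalIntegrable _ _),
    ← intervalIntegral.integral_add (f := fun t => x ^ 3 / 6 * f t - x ^ 2 / 2 * (t * f t))
      (g := fun t => x / 2 * (t ^ 2 * f t))
      (((continuous_const.mul hf).sub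
        (continuous_const.mul (continuous_id'.mul hf))).intervalIntegrable _ _)
      ((continuous_const.mul ((continuous_id'.pow 2).mul hf)).intervalIntegrable _ _),
    ← intervalIntegral.integral_sub
      (f := fun t => x ^ 3 / 6 * f t - x ^ 2 / 2 * (t * f t) + x / 2 * (t ^ 2 * f t))
      (g := fun t => 1 / 6 * (t ^ 3 * f t))
      ((((continuous_const.mul hf).sub
        (continuous_const.mul (continuous_id'.mul hf))).add
        (continuous_const.mul ((continuous_id'.pow 2).mul hf))).intervalIntegrable _ _)
      ((continuous_const.mul ((continuous_id'.pow 3).mul hf)).intervalIntegrable _ _)]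
  exact intervalIntegral.integral_congr fun t _ => by ring

lemma J1_hasDerivAt (hf : Continuous f) (x : ℝ) : HasDerivAt (J1 f) (J0 f x) x := by
  have h0 := J0_hasDerivAt hf x
  have h1 := J0_hasDerivAt (f := fun t => t * f t) (continuous_id'.mul hf) x
  have key := ((hasDerivAt_id x).mul h0).sub h1
  have heq : J1 f = fun y => y * J0 f y - J0 (fun t => t * f t) y := funext fun y => E1 hf y
  rw [heq]
  exact key.congr_d (by simp only [id_eq]; ring)

lemma J2_hasDerivAt (hf : Continuous f) (x : ℝ) : HasDerivAt (J2 f) (J1 f x) x := by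
  have h0 := J0_hasDerivAt hf x
  have h1 := J0_hasDerivAt (f := fun t => t * f t) (continuous_id'.mul hf) x
  have h2 := J0_hasDerivAt (f := fun t => t ^ 2 * f t) ((continuous_id'.pow 2).mul hf) x
  have key := ((((hasDerivAt_pow 2 x).div_const 2).mul h0).sub ((hasDerivAt_id x).mul h1)).add
    (h2.const_mul (1 / 2 : ℝ))
  have heq : J2 f = fun y => y ^ 2 / 2 * J0 f y - y * J0 (fun t => t * f t) y
      + 1 / 2 * J0 (fun t => t ^ 2 * f t) y := funext fun y => E2 hf y
  rw [heq]
  refine key.congr_d ?_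
  rw [E1 hf x]
  simp only [id_eq]
  push_cast
  ring

lemma J3_hasDerivAt (hf : Continuous f) (x : ℝ) : HasDerivAt (J3 f) (J2 f x) x := by
  have h0 := J0_hasDerivAt hf x
  have h1 := J0_hasDerivAt (f := fun t => t * f t) (continuous_id'.mul hf) x
  have h2 := J0_hasDerivAt (f := fun t => t ^ 2 * f t) ((continuous_id'.pow 2).mul hf) x
  have h3 := J0_hasDerivAt (f := fun t => t ^ 3 * f t) ((continuous_id'.pow 3).mul hf) x
  have key := (((((hasDerivAt_pow 3 x).div_const 6).mul h0).sub
    (((hasDerivAt_pow 2 x).div_const 2).mul h1)).add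
    (((hasDerivAt_id x).div_const 2).mul h2)).sub (h3.const_mul (1 / 6 : ℝ))
  have heq : J3 f = fun y => y ^ 3 / 6 * J0 f y - y ^ 2 / 2 * J0 (fun t => t * f t) y
      + y / 2 * J0 (fun t => t ^ 2 * f t) y - 1 / 6 * J0 (fun t => t ^ 3 * f t) y :=
    funext fun y => E3 hf y
  rw [heq]
  refine key.congr_d ?_
  rw [E2 hf x]
  simp only [id_eq]
  push_cast
  ring

lemma intSwap37 (F : ℝ → ℝ → ℝ) (hF : Continuous fun p : ℝ × ℝ => F p.1 p.2) (a b : ℝ) :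
    (∫ η in (0:ℝ)..a, ∫ τ in (0:ℝ)..b, F η τ) = ∫ τ in (0:ℝ)..b, ∫ η in (0:ℝ)..a, F η τ := by
  have hint : Integrable (Function.uncurry F)
      ((volume.restrict (Set.uIoc 0 a)).prod (volume.restrict (Set.uIoc 0 b))) := by
    rw [Measure.prod_restrict, ← Measure.volume_eq_prod]
    refine IntegrableOn.mono_set (t := Set.uIcc (0:ℝ) a ×ˢ Set.uIcc (0:ℝ) b)
      (hF.continuousOn.integrableOn_compact
        ((isCompact_uIcc (a := (0:ℝ)) (b := a)).prod (isCompact_uIcc (a := (0:ℝ)) (b := b)))) ?_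
    exact Set.prod_mono Set.uIoc_subset_uIcc Set.uIoc_subset_uIcc
  have hswap := MeasureTheory.integral_integral_swap hint
  simp only [intervalIntegral.intervalIntegral_eq_integral_uIoc, MeasureTheory.integral_smul]
  rw [hswap, smul_comm]

noncomputable def Vq (Z : ℕ → ℕ → ℝ) (Z2 : ℕ → ℝ → ℝ) (j : ℕ) (s : ℝ) : ℝ :=
  Z 0 j + s * Z 1 j + J1 (Z2 j) s

noncomputable def Kg (g : ℝ → ℝ → ℝ) (s τ : ℝ) : ℝ := J1 (fun η => g η τ) s

/-- Mixed partial derivative `D₁^i D₂^j u`. -/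
noncomputable def Dmix (i j : ℕ) (u : ℝ → ℝ → ℝ) : ℝ → ℝ → ℝ :=
  fun x₁ x₂ => iteratedDeriv i (fun s => iteratedDeriv j (u s) x₂) x₁

theorem stmt_11 (g : ℝ → ℝ → ℝ) (hg : Continuous (fun p : ℝ × ℝ => g p.1 p.2))
    (Z : ℕ → ℕ → ℝ) (Z2 : ℕ → ℝ → ℝ) (Z4 : ℕ → ℝ → ℝ)
    (hZ2 : ∀ j ≤ 3, Continuous (Z2 j)) (hZ4 : ∀ i ≤ 1, Continuous (Z4 i))
    (u : ℝ → ℝ → ℝ)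
    (hu : ∀ x₁ x₂ : ℝ, u x₁ x₂ =
      (∑ i ∈ Finset.range 2, ∑ j ∈ Finset.range 4,
        x₁ ^ i / (Nat.factorial i : ℝ) * (x₂ ^ j / (Nat.factorial j : ℝ)) * Z i j)
      + (∑ j ∈ Finset.range 4, x₂ ^ j / (Nat.factorial j : ℝ) *
          ∫ η in (0:ℝ)..x₁, (x₁ - η) * Z2 j η)
      + (∑ i ∈ Finset.range 2, x₁ ^ i / (Nat.factorial i : ℝ) *
          ∫ τ in (0:ℝ)..x₂, (x₂ - τ) ^ 3 / 6 * Z4 i τ)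
      + ∫ η in (0:ℝ)..x₁, ∫ τ in (0:ℝ)..x₂,
          (x₁ - η) * ((x₂ - τ) ^ 3 / 6) * g η τ) :
    (∀ x₁ x₂ : ℝ, Dmix 2 4 u x₁ x₂ = g x₁ x₂) ∧
    (∀ i ≤ 1, ∀ j ≤ 3, Dmix i j u 0 0 = Z i j) ∧
    (∀ j ≤ 3, ∀ x₁ : ℝ, Dmix 2 j u x₁ 0 = Z2 j x₁) ∧
    (∀ i ≤ 1, ∀ x₂ : ℝ, Dmix i 4 u 0 x₂ = Z4 i x₂) := by
  -- continuity helpers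
  have hgx : ∀ b : ℝ, Continuous fun η => g η b := fun b =>
    hg.comp (continuous_id.prodMk continuous_const)
  have hKc : ∀ s : ℝ, Continuous (Kg g s) := by
    intro s
    have hc : Continuous (Function.uncurry fun τ η => (s - η) * g η τ) :=
      (continuous_const.sub continuous_snd).mul (hg.comp (continuous_snd.prodMk continuous_fst))
    exact intervalIntegral.continuous_parametric_intervalIntegral_of_continuous' hc 0 s
  -- Fubini
  have hdouble : ∀ a b : ℝ,
      (∫ η in (0:ℝ)..a, ∫ τ in (0:ℝ)..b, (a - η) * ((b - τ) ^ 3 / 6) * g η τ)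
        = J3 (Kg g a) b := by
    intro a b
    rw [intSwap37 (fun η τ => (a - η) * ((b - τ) ^ 3 / 6) * g η τ)
      (((continuous_const.sub continuous_fst).mul
        (((continuous_const.sub continuous_snd).pow 3).div_const 6)).mul hg) a b]
    refine intervalIntegral.integral_congr fun τ _ => ?_
    show _ = (b - τ) ^ 3 / 6 * Kg g a τ
    unfold Kg J1
    rw [← intervalIntegral.integral_const_mul]
    exact intervalIntegral.integral_congr fun η _ => by ring
  -- closed form of u
  have hu' : ∀ s x₂ : ℝ, u s x₂ =
      Vq Z Z2 0 s + x₂ * Vq Z Z2 1 s + x₂ ^ 2 / 2 * Vq Z Z2 2 s + x₂ ^ 3 / 6 * Vq Z Z2 3 s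
        + J3 (Z4 0) x₂ + s * J3 (Z4 1) x₂ + J3 (Kg g s) x₂ := by
    intro s x₂
    rw [hu s x₂, hdouble s x₂]
    simp only [Finset.sum_range_succ, Finset.sum_range_zero, Nat.factorial]
    unfold Vq J1 J3
    push_cast
    ring
  -- derivative chain in x₂
  have hV0d : ∀ s x₂ : ℝ, HasDerivAt
      (fun y => Vq Z Z2 0 s + y * Vq Z Z2 1 s + y ^ 2 / 2 * Vq Z Z2 2 s + y ^ 3 / 6 * Vq Z Z2 3 s
        + J3 (Z4 0) y + s * J3 (Z4 1) y + J3 (Kg g s) y)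
      (Vq Z Z2 1 s + x₂ * Vq Z Z2 2 s + x₂ ^ 2 / 2 * Vq Z Z2 3 s
        + J2 (Z4 0) x₂ + s * J2 (Z4 1) x₂ + J2 (Kg g s) x₂) x₂ := by
    intro s x₂
    have h := ((((((hasDerivAt_const x₂ (Vq Z Z2 0 s)).add
      ((hasDerivAt_id x₂).mul_const (Vq Z Z2 1 s))).add
      (((hasDerivAt_pow 2 x₂).div_const 2).mul_const (Vq Z Z2 2 s))).add
      (((hasDerivAt_pow 3 x₂).div_const 6).mul_const (Vq Z Z2 3 s))).add
      (J3_hasDerivAt (hZ4 0 (by norm_num)) x₂)).add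
      ((J3_hasDerivAt (hZ4 1 le_rfl) x₂).const_mul s)).add (J3_hasDerivAt (hKc s) x₂)
    exact h.congr_d (by push_cast [id_eq]; ring)
  have hV1d : ∀ s x₂ : ℝ, HasDerivAt
      (fun y => Vq Z Z2 1 s + y * Vq Z Z2 2 s + y ^ 2 / 2 * Vq Z Z2 3 s
        + J2 (Z4 0) y + s * J2 (Z4 1) y + J2 (Kg g s) y)
      (Vq Z Z2 2 s + x₂ * Vq Z Z2 3 s + J1 (Z4 0) x₂ + s * J1 (Z4 1) x₂ + J1 (Kg g s) x₂) x₂ := by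
    intro s x₂
    have h := (((((hasDerivAt_const x₂ (Vq Z Z2 1 s)).add
      ((hasDerivAt_id x₂).mul_const (Vq Z Z2 2 s))).add
      (((hasDerivAt_pow 2 x₂).div_const 2).mul_const (Vq Z Z2 3 s))).add
      (J2_hasDerivAt (hZ4 0 (by norm_num)) x₂)).add
      ((J2_hasDerivAt (hZ4 1 le_rfl) x₂).const_mul s)).add (J2_hasDerivAt (hKc s) x₂)
    exact h.congr_d (by push_cast [id_eq]; ring)
  have hV2d : ∀ s x₂ : ℝ, HasDerivAt
      (fun y => Vq Z Z2 2 s + y * Vq Z Z2 3 s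
        + J1 (Z4 0) y + s * J1 (Z4 1) y + J1 (Kg g s) y)
      (Vq Z Z2 3 s + J0 (Z4 0) x₂ + s * J0 (Z4 1) x₂ + J0 (Kg g s) x₂) x₂ := by
    intro s x₂
    have h := ((((hasDerivAt_const x₂ (Vq Z Z2 2 s)).add
      ((hasDerivAt_id x₂).mul_const (Vq Z Z2 3 s))).add
      (J1_hasDerivAt (hZ4 0 (by norm_num)) x₂)).add
      ((J1_hasDerivAt (hZ4 1 le_rfl) x₂).const_mul s)).add (J1_hasDerivAt (hKc s) x₂)
    exact h.congr_d (by push_cast [id_eq]; ring)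
  have hV3d : ∀ s x₂ : ℝ, HasDerivAt
      (fun y => Vq Z Z2 3 s + J0 (Z4 0) y + s * J0 (Z4 1) y + J0 (Kg g s) y)
      (Z4 0 x₂ + s * Z4 1 x₂ + Kg g s x₂) x₂ := by
    intro s x₂
    have h := (((hasDerivAt_const x₂ (Vq Z Z2 3 s)).add
      (J0_hasDerivAt (hZ4 0 (by norm_num)) x₂)).add
      ((J0_hasDerivAt (hZ4 1 le_rfl) x₂).const_mul s)).add (J0_hasDerivAt (hKc s) x₂)
    exact h.congr_d (by ring)
  have hD1 : ∀ s : ℝ, iteratedDeriv 1 (u s) =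
      fun x₂ => Vq Z Z2 1 s + x₂ * Vq Z Z2 2 s + x₂ ^ 2 / 2 * Vq Z Z2 3 s
        + J2 (Z4 0) x₂ + s * J2 (Z4 1) x₂ + J2 (Kg g s) x₂ := by
    intro s
    rw [iteratedDeriv_one, funext (hu' s)]
    exact derivEq (hV0d s)
  have hD2 : ∀ s : ℝ, iteratedDeriv 2 (u s) =
      fun x₂ => Vq Z Z2 2 s + x₂ * Vq Z Z2 3 s
        + J1 (Z4 0) x₂ + s * J1 (Z4 1) x₂ + J1 (Kg g s) x₂ := by
    intro s
    rw [show (2:ℕ) = 1 + 1 from rfl, iteratedDeriv_succ, hD1 s]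
    exact derivEq (hV1d s)
  have hD3 : ∀ s : ℝ, iteratedDeriv 3 (u s) =
      fun x₂ => Vq Z Z2 3 s + J0 (Z4 0) x₂ + s * J0 (Z4 1) x₂ + J0 (Kg g s) x₂ := by
    intro s
    rw [show (3:ℕ) = 2 + 1 from rfl, iteratedDeriv_succ, hD2 s]
    exact derivEq (hV2d s)
  have hD4 : ∀ s : ℝ, iteratedDeriv 4 (u s) =
      fun x₂ => Z4 0 x₂ + s * Z4 1 x₂ + Kg g s x₂ := by
    intro s
    rw [show (4:ℕ) = 3 + 1 from rfl, iteratedDeriv_succ, hD3 s]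
    exact derivEq (hV3d s)
  -- evaluation at x₂ = 0
  have hAt : ∀ j ≤ 3, (fun s => iteratedDeriv j (u s) 0) = fun s => Vq Z Z2 j s := by
    intro j hj
    funext s
    interval_cases j
    · rw [iteratedDeriv_zero, hu' s 0]; norm_num
    · rw [hD1 s]; norm_num
    · rw [hD2 s]; norm_num
    · rw [hD3 s]; norm_num
  -- derivatives in the first variable of Vq
  have wq1 : ∀ j ≤ 3, ∀ t : ℝ, HasDerivAt (fun s => Vq Z Z2 j s) (Z 1 j + J0 (Z2 j) t) t := by
    intro j hj t
    have h := ((hasDerivAt_const t (Z 0 j)).add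
      ((hasDerivAt_id t).mul_const (Z 1 j))).add (J1_hasDerivAt (hZ2 j hj) t)
    exact h.congr_d (by push_cast [id_eq]; ring)
  have wq2 : ∀ j ≤ 3, ∀ t : ℝ, HasDerivAt (fun s => Z 1 j + J0 (Z2 j) s) (Z2 j t) t := by
    intro j hj t
    exact ((hasDerivAt_const t (Z 1 j)).add (J0_hasDerivAt (hZ2 j hj) t)).congr_d (zero_add _)
  -- derivatives in the first variable of the j = 4 slice
  have w1 : ∀ x₂ t : ℝ, HasDerivAt (fun s => Z4 0 x₂ + s * Z4 1 x₂ + Kg g s x₂)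
      (Z4 1 x₂ + J0 (fun η => g η x₂) t) t := by
    intro x₂ t
    have h := ((hasDerivAt_const t (Z4 0 x₂)).add
      ((hasDerivAt_id t).mul_const (Z4 1 x₂))).add (J1_hasDerivAt (hgx x₂) t)
    exact h.congr_d (by push_cast [id_eq]; ring)
  have w2 : ∀ x₂ t : ℝ, HasDerivAt (fun s => Z4 1 x₂ + J0 (fun η => g η x₂) s) (g t x₂) t := by
    intro x₂ t
    exact ((hasDerivAt_const t (Z4 1 x₂)).add (J0_hasDerivAt (hgx x₂) t)).congr_d (zero_add _)
  refine ⟨?_, ?_, ?_, ?_⟩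
  · intro x₁ x₂
    show iteratedDeriv 2 (fun s => iteratedDeriv 4 (u s) x₂) x₁ = g x₁ x₂
    have hfun : (fun s => iteratedDeriv 4 (u s) x₂)
        = fun s => Z4 0 x₂ + s * Z4 1 x₂ + Kg g s x₂ := funext fun s => by rw [hD4 s]
    rw [hfun, show (2:ℕ) = 1 + 1 from rfl, iteratedDeriv_succ, iteratedDeriv_one,
      derivEq (w1 x₂), derivEq (w2 x₂)]
  · intro i hi j hj
    interval_cases i
    · show iteratedDeriv 0 (fun s => iteratedDeriv j (u s) 0) 0 = Z 0 j
      rw [iteratedDeriv_zero]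
      have := congrFun (hAt j hj) 0
      rw [this]
      simp [Vq]
    · show iteratedDeriv 1 (fun s => iteratedDeriv j (u s) 0) 0 = Z 1 j
      rw [hAt j hj, iteratedDeriv_one, derivEq (wq1 j hj)]
      simp
  · intro j hj x₁
    show iteratedDeriv 2 (fun s => iteratedDeriv j (u s) 0) x₁ = Z2 j x₁
    rw [hAt j hj, show (2:ℕ) = 1 + 1 from rfl, iteratedDeriv_succ, iteratedDeriv_one,
      derivEq (wq1 j hj), derivEq (wq2 j hj)]
  · intro i hi x₂
    have hfun : (fun s => iteratedDeriv 4 (u s) x₂)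
        = fun s => Z4 0 x₂ + s * Z4 1 x₂ + Kg g s x₂ := funext fun s => by rw [hD4 s]
    interval_cases i
    · show iteratedDeriv 0 (fun s => iteratedDeriv 4 (u s) x₂) 0 = Z4 0 x₂
      rw [iteratedDeriv_zero]
      show iteratedDeriv 4 (u 0) x₂ = Z4 0 x₂
      rw [hD4 0]
      simp [Kg]
    · show iteratedDeriv 1 (fun s => iteratedDeriv 4 (u s) x₂) 0 = Z4 1 x₂
      rw [hfun, iteratedDeriv_one, derivEq (w1 x₂)]
      simp
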